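/- Let $F_v$ be a non-archimedean local field with residue cardinality $q$, $\tau \in \mathcal{O}^\times \setminus (\mathcal{O}^\times)^2$ with odd residue characteristic, and $b \in F_v$ with $|b| \geq 1$. For $t \in F_v^\times$ and $\mathrm{Re}(s) > -1/2$, define $B(t) = \int_{F_v} \max(|1-x|, |1+x|, |t|, |t^{-1}(\tau b^2 - x^2)|)^{-s-1}\, dx$ (additive measure with $\mathrm{vol}(\mathcal{O}) = q^{-d/2}$). Then $B(t) = q^{-d/2}\,\frac{1 - q^{-2s-2}}{1 - q^{-2s-1}} \cdot |t|^{s+1}|b|^{-2s-1}$ if $|t| \leq |b|$, and $B(t) = q^{-d/2}\,\frac{1 - q^{-2s-2}}{1 - q^{-2s-1}} \cdot |t|^{-s}$ if $|t| > |b|$. -/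

import Mathlib

open Complex MeasureTheory

private lemma auxExp {a : ℝ} (ha : 0 < a) (w : ℂ) :
    ((a : ℂ)) ^ w = Complex.exp ((Real.log a : ℂ) * w) := by
  rw [Complex.cpow_def_of_ne_zero (Complex.ofReal_ne_zero.2 ha.ne') w,
    ← Complex.ofReal_log ha.le]

private lemma auxMax {T B X : ℝ} (hT : 0 < T) (hB : 1 ≤ B) (hX : 0 ≤ X) :
    max (max 1 X) (max T (T⁻¹ * (max B X) ^ 2)) = (max (max T B) X) ^ 2 / T := by
  have hN1 : (1 : ℝ) ≤ max (max T B) X :=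
    le_trans hB (le_trans (le_max_right T B) (le_max_left _ _))
  have hTN : T ≤ max (max T B) X := le_trans (le_max_left T B) (le_max_left _ _)
  have hBN : B ≤ max (max T B) X := le_trans (le_max_right T B) (le_max_left _ _)
  have hXN : X ≤ max (max T B) X := le_max_right _ _
  have hMN : max B X ≤ max (max T B) X := max_le hBN hXN
  have hMnn : (0:ℝ) ≤ max B X := le_trans (le_trans zero_le_one hB) (le_max_left _ _)
  apply le_antisymm
  · apply max_le (max_le ?_ ?_) (max_le ?_ ?_)
    · rw [le_div_iff₀ hT]; nlinarith
    · rw [le_div_iff₀ hT]; nlinarith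
    · rw [le_div_iff₀ hT]; nlinarith
    · rw [inv_mul_eq_div, div_le_div_iff_of_pos_right hT]
      nlinarith
  · rcases le_total X (max T B) with hX1 | hX1
    · rcases le_total T B with h2 | h2
      · have hNB : max (max T B) X = B := by
          rw [max_eq_right h2]; exact max_eq_left (by rwa [max_eq_right h2] at hX1)
        have hMB : max B X = B := max_eq_left (by rwa [max_eq_right h2] at hX1)
        calc (max (max T B) X) ^ 2 / T = T⁻¹ * (max B X) ^ 2 := by rw [hNB, hMB]; ring
        _ ≤ _ := le_max_of_le_right (le_max_right _ _)
      · have hNT : max (max T B) X = T := by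
          rw [max_eq_left h2]; exact max_eq_left (by rwa [max_eq_left h2] at hX1)
        calc (max (max T B) X) ^ 2 / T = T := by
              rw [hNT, sq, mul_div_assoc, div_self hT.ne', mul_one]
        _ ≤ _ := le_max_of_le_right (le_max_left _ _)
    · have hNX : max (max T B) X = X := max_eq_right hX1
      have hMX : max B X = X := max_eq_right (le_trans (le_trans (le_max_right T B) hX1) le_rfl)
      calc (max (max T B) X) ^ 2 / T = T⁻¹ * (max B X) ^ 2 := by rw [hNX, hMX]; ring
      _ ≤ _ := le_max_of_le_right (le_max_right _ _)

private lemma auxAlg {P C Q Tm Rm ζ w : ℂ} (hζ : 1 - ζ ≠ 0) (hw : w ≠ 0)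
    (hkey : P * C = Q * Tm * Rm) :
    P * C + P * (1 - w⁻¹) * (C * ζ) * (1 - ζ)⁻¹ = Q * ((1 - w⁻¹ * ζ) / (1 - ζ)) * Tm * Rm := by
  field_simp
  linear_combination (w - ζ) * hkey

theorem stmt_11 (K : Type*) [Field K] [MeasurableSpace K]
    (v : K → ℝ) (q : ℝ) (hq : 1 < q) (d : ℕ)
    (hv0 : ∀ x : K, v x = 0 ↔ x = 0)
    (hvmul : ∀ x y : K, v (x * y) = v x * v y)
    (hvadd : ∀ x y : K, v (x + y) ≤ max (v x) (v y))
    (hval : ∀ x : K, x ≠ 0 → ∃ n : ℤ, v x = q ^ n)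
    (μ : Measure K)
    (hmeas : ∀ (a : K) (n : ℤ), MeasurableSet {x : K | v (x - a) ≤ q ^ n})
    (hμball : ∀ n : ℤ, μ {x : K | v x ≤ q ^ n} = ENNReal.ofReal (q ^ ((n : ℝ) - d / 2)))
    (hμinv : ∀ (a : K) (S : Set K), μ {x : K | x + a ∈ S} = μ S)
    (τ b t : K) (hτu : v τ = 1) (hτns : ¬ ∃ u : K, v u = 1 ∧ u ^ 2 = τ)
    (hodd : v 2 = 1)
    (hhensel : ∀ u : K, v u ≤ 1 → v (u ^ 2 - τ) = 1)
    (hb : 1 ≤ v b) (ht : t ≠ 0) (s : ℂ) (hs : -(1 / 2 : ℝ) < s.re) :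
    (v t ≤ v b →
      (∫ x : K, ((max (max (v (1 - x)) (v (1 + x)))
            (max (v t) (v (t⁻¹ * (τ * b ^ 2 - x ^ 2)))) : ℝ) : ℂ) ^ (-(s + 1)) ∂μ) =
        ((q ^ (-(d : ℝ) / 2) : ℝ) : ℂ) *
          ((1 - (q : ℂ) ^ (-2 * s - 2)) / (1 - (q : ℂ) ^ (-2 * s - 1))) *
          ((v t : ℝ) : ℂ) ^ (s + 1) * ((v b : ℝ) : ℂ) ^ (-2 * s - 1)) ∧
    (v b < v t →
      (∫ x : K, ((max (max (v (1 - x)) (v (1 + x)))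
            (max (v t) (v (t⁻¹ * (τ * b ^ 2 - x ^ 2)))) : ℝ) : ℂ) ^ (-(s + 1)) ∂μ) =
        ((q ^ (-(d : ℝ) / 2) : ℝ) : ℂ) *
          ((1 - (q : ℂ) ^ (-2 * s - 2)) / (1 - (q : ℂ) ^ (-2 * s - 1))) *
          ((v t : ℝ) : ℂ) ^ (-s)) := by
  have hq0 : (0:ℝ) < q := lt_trans one_pos hq
  -- basic valuation facts
  have hv1 : v 1 = 1 := by
    have h := hvmul 1 1
    rw [mul_one] at h
    have h1 : v 1 ≠ 0 := fun h' => one_ne_zero ((hv0 1).1 h')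
    have h2 : v 1 * v 1 = v 1 * 1 := by rw [mul_one, ← h]
    exact mul_left_cancel₀ h1 h2
  have hvpos : ∀ x : K, x ≠ 0 → 0 < v x := by
    intro x hx
    obtain ⟨n, hn⟩ := hval x hx
    rw [hn]; positivity
  have hvnn : ∀ x : K, 0 ≤ v x := by
    intro x
    by_cases hx : x = 0
    · rw [hx, (hv0 0).2 rfl]
    · exact (hvpos x hx).le
  have hvm1 : v (-1 : K) = 1 := by
    have h := hvmul (-1 : K) (-1)
    rw [neg_mul_neg, one_mul, hv1] at h
    have hp : 0 < v (-1 : K) := hvpos _ (by simp)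
    nlinarith
  have hvneg : ∀ x : K, v (-x) = v x := by
    intro x
    have := hvmul (-1 : K) x
    rw [hvm1, one_mul, neg_one_mul] at this
    exact this
  have hdom : ∀ a c : K, v c < v a → v (a + c) = v a := by
    intro a c h
    apply le_antisymm (le_trans (hvadd a c) (max_le le_rfl h.le))
    have h2 := hvadd (a + c) (-c)
    rw [add_neg_cancel_right, hvneg] at h2
    rcases le_max_iff.1 h2 with h' | h'
    · exact h'
    · linarith
  set T : ℝ := v t with hTdef
  set B : ℝ := v b with hBdef
  have hT : 0 < T := hvpos t ht
  have hb0 : b ≠ 0 := by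
    intro h
    rw [hBdef, h, (hv0 0).2 rfl] at hb
    linarith
  have hB0 : 0 < B := hvpos b hb0
  have hvinv : ∀ x : K, x ≠ 0 → v x⁻¹ = (v x)⁻¹ := by
    intro x hx
    have h := hvmul x x⁻¹
    rw [mul_inv_cancel₀ hx, hv1] at h
    exact eq_inv_of_mul_eq_one_left (by rw [mul_comm, ← h])
  -- the quadratic valuation
  have hbig : ∀ x : K, v (τ * b ^ 2 - x ^ 2) = (max B (v x)) ^ 2 := by
    intro x
    rcases le_or_gt (v x) B with hxb | hxb
    · have hu : v (x * b⁻¹) ≤ 1 := by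
        rw [hvmul, hvinv b hb0]
        rw [mul_inv_le_iff₀ hB0, one_mul]
        exact hxb
      have hh := hhensel _ hu
      have hid : τ * b ^ 2 - x ^ 2 = -(b ^ 2 * ((x * b⁻¹) ^ 2 - τ)) := by
        field_simp
        ring
      rw [hid, hvneg, hvmul, hh, mul_one, max_eq_left hxb, pow_two, hvmul, ← pow_two]
    · have hid : τ * b ^ 2 - x ^ 2 = (-(x ^ 2)) + τ * b ^ 2 := by ring
      have hvx2 : v (-(x ^ 2)) = (v x) ^ 2 := by
        rw [hvneg, pow_two, hvmul, ← pow_two]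
      have hvtb : v (τ * b ^ 2) = B ^ 2 := by
        rw [hvmul, hτu, one_mul, pow_two, hvmul, ← pow_two]
      rw [hid, hdom _ _ (by rw [hvx2, hvtb]; nlinarith), hvx2, max_eq_right hxb.le]
  -- the linear max
  have h1x : ∀ x : K, max (v (1 - x)) (v (1 + x)) = max 1 (v x) := by
    intro x
    apply le_antisymm
    · apply max_le
      · have := hvadd 1 (-x)
        rw [← sub_eq_add_neg, hv1, hvneg] at this
        exact this
      · have := hvadd 1 x
        rw [hv1] at this
        exact this
    · apply max_le
      · have h2 := hvadd (1 - x) (1 + x)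
        rw [show (1 - x) + (1 + x) = 2 by ring, hodd] at h2
        exact h2
      · have h2 := hvadd (1 + x) (-(1 - x))
        rw [show (1 + x) + -(1 - x) = 2 * x by ring, hvneg, hvmul, hodd, one_mul,
          max_comm] at h2
        exact h2
  obtain ⟨mt, hmt⟩ := hval t ht
  obtain ⟨mb, hmb⟩ := hval b hb0
  obtain ⟨r, hrq⟩ : ∃ r : ℤ, max T B = q ^ r := by
    rcases le_total T B with h | h
    · exact ⟨mb, by rw [max_eq_right h, hBdef, hmb]⟩
    · exact ⟨mt, by rw [max_eq_left h, hTdef, hmt]⟩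
  have hRpos : (0:ℝ) < q ^ r := zpow_pos hq0 r
  -- the pointwise identity
  have hfeq : ∀ x : K, max (max (v (1 - x)) (v (1 + x)))
      (max (v t) (v (t⁻¹ * (τ * b ^ 2 - x ^ 2)))) = (max (q ^ r) (v x)) ^ 2 / T := by
    intro x
    rw [h1x, hvmul, hvinv t ht, hbig, ← hTdef, auxMax hT hb (hvnn x), hrq]
  -- local notation
  set c : ℕ → ℂ := fun n =>
    Complex.exp (((2 * ((r : ℝ) + n) * Real.log q - Real.log T : ℝ) : ℂ) * (-(s + 1))) with hc
  set A : ℕ → Set K := fun n =>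
    if n = 0 then {x : K | v x ≤ q ^ r}
    else {x : K | v x ≤ q ^ (r + (n : ℤ))} \ {x : K | v x ≤ q ^ (r + (n : ℤ) - 1)} with hA
  have hmeas0 : ∀ n : ℤ, MeasurableSet {x : K | v x ≤ q ^ n} := by
    intro n; simpa using hmeas 0 n
  have hAmeas : ∀ n : ℕ, MeasurableSet (A n) := by
    intro n
    rw [hA]
    by_cases h : n = 0
    · simp only [if_pos h]; exact hmeas0 r
    · simp only [if_neg h]; exact (hmeas0 _).diff (hmeas0 _)
  have hval2exp : ∀ j : ℤ, (((q ^ j : ℝ) ^ 2 / T : ℝ) : ℂ) ^ (-(s + 1))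
      = Complex.exp (((2 * (j : ℝ) * Real.log q - Real.log T : ℝ) : ℂ) * (-(s + 1))) := by
    intro j
    have hpos : (0:ℝ) < (q ^ j : ℝ) ^ 2 / T := by positivity
    rw [auxExp hpos]
    congr 1
    have hlog : Real.log ((q ^ j : ℝ) ^ 2 / T) = 2 * (j : ℝ) * Real.log q - Real.log T := by
      rw [Real.log_div (pow_pos (zpow_pos hq0 j) 2).ne' hT.ne', Real.log_pow, Real.log_zpow]
      push_cast
      ring
    rw [hlog]
  -- pointwise expansion into a sum of indicators
  have hcover : ∀ x : K, (((max (q ^ r) (v x)) ^ 2 / T : ℝ) : ℂ) ^ (-(s + 1))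
      = ∑' n : ℕ, (A n).indicator (fun _ => c n) x := by
    intro x
    by_cases hx : v x ≤ q ^ r
    · have hmem : x ∈ A 0 := by rw [hA]; simp only [↓reduceIte]; exact hx
      have hzero : ∀ m : ℕ, m ≠ 0 → (A m).indicator (fun _ => c m) x = 0 := by
        intro m hm
        apply Set.indicator_of_notMem
        rw [hA]
        simp only [if_neg hm]
        intro hmem2
        exact hmem2.2 (show v x ≤ q ^ (r + (m : ℤ) - 1) from
          le_trans hx (zpow_le_zpow_right₀ hq.le (by omega)))
      rw [tsum_eq_single 0 hzero, Set.indicator_of_mem hmem, max_eq_left hx, hval2exp r, hc]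
      norm_num
    · push_neg at hx
      have hx0 : x ≠ 0 := by
        intro h
        rw [h, (hv0 0).2 rfl] at hx
        linarith
      obtain ⟨j, hj⟩ := hval x hx0
      have hrj : r < j := by
        by_contra hcon
        push_neg at hcon
        rw [hj] at hx
        exact absurd (zpow_le_zpow_right₀ hq.le hcon) (not_le.2 hx)
      set n₀ : ℕ := (j - r).toNat with hn₀def
      have hn₀ : r + (n₀ : ℤ) = j := by omega
      have hn₀pos : n₀ ≠ 0 := by omega
      have hmem : x ∈ A n₀ := by
        rw [hA]
        simp only [if_neg hn₀pos]
        constructor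
        · show v x ≤ q ^ (r + (n₀ : ℤ))
          rw [hj, hn₀]
        · show ¬ v x ≤ q ^ (r + (n₀ : ℤ) - 1)
          rw [hj]
          exact not_le.2 (zpow_lt_zpow_right₀ hq (by omega))
      have hzero : ∀ m : ℕ, m ≠ n₀ → (A m).indicator (fun _ => c m) x = 0 := by
        intro m hm
        apply Set.indicator_of_notMem
        rw [hA]
        by_cases hm0 : m = 0
        · subst hm0
          simp only [↓reduceIte]
          exact fun h => (not_le.2 hx) h
        · simp only [if_neg hm0]
          intro hmem2
          rcases lt_or_ge (r + (m : ℤ)) j with hlt | hle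
          · have hmem1 : v x ≤ q ^ (r + (m : ℤ)) := hmem2.1
            rw [hj] at hmem1
            exact absurd hmem1 (not_le.2 (zpow_lt_zpow_right₀ hq hlt))
          · exact hmem2.2 (show v x ≤ q ^ (r + (m : ℤ) - 1) by
              rw [hj]; exact zpow_le_zpow_right₀ hq.le (by omega))
      have hjr : (j : ℝ) = (r : ℝ) + (n₀ : ℝ) := by rw [← hn₀]; push_cast; ring
      rw [tsum_eq_single n₀ hzero, Set.indicator_of_mem hmem, max_eq_right hx.le, hj,
        hval2exp j, hc, hjr]
  -- measures of the pieces
  have hsub : ∀ k l : ℤ, k ≤ l → {x : K | v x ≤ q ^ k} ⊆ {x : K | v x ≤ q ^ l} :=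
    fun k l hkl x hx => le_trans hx (zpow_le_zpow_right₀ hq.le hkl)
  have hball_meas : ∀ n : ℕ, μ {x : K | v x ≤ q ^ (r + (n : ℤ))}
      = ENNReal.ofReal (q ^ ((r : ℝ) - d / 2) * q ^ n) := by
    intro n
    rw [hμball]
    congr 1
    rw [show ((r + (n : ℤ) : ℤ) : ℝ) - d / 2 = ((r : ℝ) - d / 2) + (n : ℝ) by push_cast; ring,
      Real.rpow_add hq0, Real.rpow_natCast]
  have hm0 : (μ (A 0)).toReal = q ^ ((r : ℝ) - d / 2) := by
    rw [hA]
    simp only [↓reduceIte]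
    rw [hμball r, ENNReal.toReal_ofReal (by positivity)]
  have hmS : ∀ n : ℕ, (μ (A (n + 1))).toReal
      = q ^ ((r : ℝ) - d / 2) * (q ^ (n + 1) - q ^ n) := by
    intro n
    rw [hA]
    simp only [if_neg (Nat.succ_ne_zero n)]
    rw [show r + ((n + 1 : ℕ) : ℤ) - 1 = r + (n : ℤ) by push_cast; ring]
    rw [measure_diff (hsub _ _ (by omega)) (hmeas0 _).nullMeasurableSet
      (by rw [hμball]; exact ENNReal.ofReal_ne_top)]
    have h1 : (q : ℝ) ^ n ≤ q ^ (n + 1) := pow_le_pow_right₀ hq.le (Nat.le_succ n)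
    have h2 : (0:ℝ) < q ^ ((r : ℝ) - d / 2) := by positivity
    rw [hball_meas (n + 1), hball_meas n,
      ← ENNReal.ofReal_sub _ (by positivity), ENNReal.toReal_ofReal (by nlinarith)]
    ring
  -- norm of the constants
  have hcnorm : ∀ n : ℕ, ‖c n‖
      = Real.exp ((2 * ((r : ℝ) + n) * Real.log q - Real.log T) * (-(s.re + 1))) := by
    intro n
    rw [hc]
    simp only [Complex.norm_exp, Complex.re_ofReal_mul, Complex.neg_re,
      Complex.add_re, Complex.one_re]
  have hlint : ∀ n : ℕ, (∫⁻ x, ‖(A n).indicator (fun _ => c n) x‖₊ ∂μ)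
      = ENNReal.ofReal ‖c n‖ * μ (A n) := by
    intro n
    have hind : (fun x => (‖(A n).indicator (fun _ => c n) x‖₊ : ENNReal))
        = (A n).indicator (fun _ => ((‖c n‖₊ : ENNReal))) := by
      funext x
      by_cases h : x ∈ A n <;>
        simp [Set.indicator_of_mem, Set.indicator_of_notMem, h]
    rw [hind, lintegral_indicator_const (hAmeas n)]; exact congrArg (· * μ (A n)) (ofReal_norm (c n)).symm
  have hAle : ∀ n : ℕ, μ (A n) ≤ ENNReal.ofReal (q ^ ((r : ℝ) - d / 2) * q ^ n) := by
    intro n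
    cases n with
    | zero =>
      rw [hA]
      simp only [↓reduceIte]
      rw [hμball r, pow_zero, mul_one]
    | succ k =>
      rw [hA]
      simp only [if_neg (Nat.succ_ne_zero k)]
      exact le_trans (measure_mono Set.diff_subset) (le_of_eq (hball_meas (k + 1)))
  -- summability of the norm bounds
  set u : ℕ → ℝ := fun n => ‖c n‖ * (q ^ ((r : ℝ) - d / 2) * q ^ n) with hu
  have huval : ∀ n : ℕ, u n
      = (Real.exp ((2 * (r : ℝ) * Real.log q - Real.log T) * (-(s.re + 1)))
          * q ^ ((r : ℝ) - d / 2))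
        * (Real.exp (Real.log q * (-(2 * s.re + 1)))) ^ n := by
    intro n
    rw [hu]
    simp only
    rw [hcnorm n,
      show (2 * ((r : ℝ) + n) * Real.log q - Real.log T) * (-(s.re + 1))
        = (2 * (r : ℝ) * Real.log q - Real.log T) * (-(s.re + 1))
          + (n : ℝ) * (2 * Real.log q * (-(s.re + 1))) by ring,
      Real.exp_add, Real.exp_nat_mul]
    have hqexp : (q : ℝ) ^ n = (Real.exp (Real.log q)) ^ n := by rw [Real.exp_log hq0]
    rw [hqexp]
    rw [show Real.exp (Real.log q * (-(2 * s.re + 1)))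
        = Real.exp (2 * Real.log q * (-(s.re + 1))) * Real.exp (Real.log q) by
      rw [← Real.exp_add]; congr 1; ring, mul_pow]
    ring
  have hcontr : Real.exp (Real.log q * (-(2 * s.re + 1))) < 1 := by
    rw [Real.exp_lt_one_iff]
    apply mul_neg_of_pos_of_neg (Real.log_pos hq)
    linarith
  have hsumu : Summable u :=
    Summable.congr
      ((summable_geometric_of_lt_one (Real.exp_nonneg _) hcontr).mul_left _)
      (fun n => (huval n).symm)
  have hne : (∑' n : ℕ, ∫⁻ x, ‖(A n).indicator (fun _ => c n) x‖₊ ∂μ) ≠ ⊤ := by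
    apply ne_top_of_le_ne_top (show ENNReal.ofReal (∑' n, u n) ≠ ⊤ from ENNReal.ofReal_ne_top)
    rw [ENNReal.ofReal_tsum_of_nonneg (fun n => by rw [hu]; positivity) hsumu]
    apply ENNReal.tsum_le_tsum
    intro n
    rw [hlint n]
    calc ENNReal.ofReal ‖c n‖ * μ (A n)
        ≤ ENNReal.ofReal ‖c n‖ * ENNReal.ofReal (q ^ ((r : ℝ) - d / 2) * q ^ n) :=
          mul_le_mul_right (hAle n) _
      _ = ENNReal.ofReal (u n) := by
          rw [← ENNReal.ofReal_mul (norm_nonneg _), hu]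
  -- the integral as a series
  have hInt : (∫ x : K, (((max (q ^ r) (v x)) ^ 2 / T : ℝ) : ℂ) ^ (-(s + 1)) ∂μ)
      = ∑' n : ℕ, (μ (A n)).toReal • c n := by
    have h1 : (fun x : K => (((max (q ^ r) (v x)) ^ 2 / T : ℝ) : ℂ) ^ (-(s + 1)))
        = fun x => ∑' n : ℕ, (A n).indicator (fun _ => c n) x := funext hcover
    rw [h1, integral_tsum
      (fun n => (measurable_const.indicator (hAmeas n)).aestronglyMeasurable) hne]
    exact tsum_congr (fun n => integral_indicator_const (c n) (hAmeas n))
  -- geometric factors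
  set ζ : ℂ := Complex.exp ((Real.log q : ℂ) * (-2 * s - 1)) with hζ
  set ζ2 : ℂ := Complex.exp ((Real.log q : ℂ) * (-2 * s - 2)) with hζ2
  have hζq : (q : ℂ) ^ (-2 * s - 1 : ℂ) = ζ := auxExp hq0 _
  have hζ2q : (q : ℂ) ^ (-2 * s - 2 : ℂ) = ζ2 := auxExp hq0 _
  have hζnorm : ‖ζ‖ < 1 := by
    rw [hζ, Complex.norm_exp, Complex.re_ofReal_mul, Real.exp_lt_one_iff]
    have hre : (-2 * s - 1).re = -2 * s.re - 1 := by simp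
    rw [hre]
    apply mul_neg_of_pos_of_neg (Real.log_pos hq)
    linarith
  have hζne : 1 - ζ ≠ 0 := by
    intro h
    have hζ1 : ζ = 1 := by linear_combination -h
    rw [hζ1] at hζnorm
    simp at hζnorm
  have hqne : (q : ℂ) ≠ 0 := Complex.ofReal_ne_zero.2 hq0.ne'
  have hqζ : (q : ℂ) * ζ2 = ζ := by
    rw [hζ, hζ2, show (q : ℂ) = Complex.exp ((Real.log q : ℂ)) by
      rw [← Complex.ofReal_exp, Real.exp_log hq0], ← Complex.exp_add]
    congr 1
    ring
  have hqζ' : (q : ℂ)⁻¹ * ζ = ζ2 := by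
    rw [← hqζ]
    field_simp
  have hcz : ∀ k : ℕ, c k = c 0 * ζ2 ^ k := by
    intro k
    rw [hc, hζ2]
    simp only
    rw [← Complex.exp_nat_mul, ← Complex.exp_add]
    congr 1
    push_cast
    ring
  have hW : ∀ n : ℕ, (μ (A (n + 1))).toReal • c (n + 1)
      = ((q ^ ((r : ℝ) - d / 2) * (1 - q⁻¹) : ℝ) • (c 0 * ζ)) * ζ ^ n := by
    intro n
    rw [hmS n, hcz (n + 1), Complex.real_smul, Complex.real_smul]
    push_cast
    rw [← hqζ]
    field_simp
    ring
  have hWsummable : Summable (fun n : ℕ => (μ (A n)).toReal • c n) := by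
    rw [← summable_nat_add_iff 1]
    exact Summable.congr
      ((summable_geometric_of_norm_lt_one hζnorm).mul_left _)
      (fun n => (hW n).symm)
  have hS : ∑' n : ℕ, (μ (A n)).toReal • c n
      = (μ (A 0)).toReal • c 0
        + ((q ^ ((r : ℝ) - d / 2) * (1 - q⁻¹) : ℝ) • (c 0 * ζ)) * (1 - ζ)⁻¹ := by
    rw [hWsummable.tsum_eq_zero_add]
    congr 1
    rw [tsum_congr hW, tsum_mul_left, tsum_geometric_of_norm_lt_one hζnorm]
  have hc0 : c 0 = Complex.exp (((2 * (r : ℝ) * Real.log q - Real.log T : ℝ) : ℂ) * (-(s + 1))) := by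
    rw [hc]
    norm_num
  have hGen : (∫ x : K, ((max (max (v (1 - x)) (v (1 + x)))
        (max (v t) (v (t⁻¹ * (τ * b ^ 2 - x ^ 2)))) : ℝ) : ℂ) ^ (-(s + 1)) ∂μ)
      = ((q ^ (-(d : ℝ) / 2) : ℝ) : ℂ)
        * ((1 - (q : ℂ) ^ (-2 * s - 2)) / (1 - (q : ℂ) ^ (-2 * s - 1)))
        * ((T : ℝ) : ℂ) ^ (s + 1) * ((q ^ r : ℝ) : ℂ) ^ (-2 * s - 1 : ℂ) := by
    have h0 : (fun x : K => ((max (max (v (1 - x)) (v (1 + x)))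
        (max (v t) (v (t⁻¹ * (τ * b ^ 2 - x ^ 2)))) : ℝ) : ℂ) ^ (-(s + 1)))
        = fun x : K => (((max (q ^ r) (v x)) ^ 2 / T : ℝ) : ℂ) ^ (-(s + 1)) := by
      funext x
      rw [hfeq x]
    rw [h0, hInt, hS, hm0, hc0, hζq, hζ2q,
      auxExp hT (s + 1), auxExp hRpos (-2 * s - 1 : ℂ), Real.log_zpow,
      Real.rpow_def_of_pos hq0 (-(d : ℝ) / 2), Real.rpow_def_of_pos hq0 ((r : ℝ) - d / 2),
      Complex.real_smul, Complex.real_smul, ← hqζ']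
    push_cast [Complex.ofReal_exp]
    have hkey : Complex.exp ((Real.log q : ℂ) * ((r : ℂ) - (d : ℂ) / 2))
          * Complex.exp ((2 * (r : ℂ) * (Real.log q : ℂ) - (Real.log T : ℂ)) * -(s + 1))
        = Complex.exp ((Real.log q : ℂ) * (-(d : ℂ) / 2))
          * Complex.exp ((Real.log T : ℂ) * (s + 1))
          * Complex.exp ((r : ℂ) * (Real.log q : ℂ) * (-2 * s - 1)) := by
      rw [← Complex.exp_add, ← Complex.exp_add, ← Complex.exp_add]
      congr 1
      ring
    linear_combination auxAlg hζne hqne hkey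
  refine ⟨fun hTB => ?_, fun hBT => ?_⟩
  · have hBr : B = q ^ r := by rw [← hrq, max_eq_right hTB]
    rw [hGen, ← hBr]
  · have hTr : T = q ^ r := by rw [← hrq, max_eq_left hBT.le]
    have hTne : ((T : ℝ) : ℂ) ≠ 0 := Complex.ofReal_ne_zero.2 hT.ne'
    have hTpow : ((T : ℝ) : ℂ) ^ (s + 1) * ((T : ℝ) : ℂ) ^ (-2 * s - 1 : ℂ)
        = ((T : ℝ) : ℂ) ^ (-s) := by
      rw [← Complex.cpow_add _ _ hTne]
      congr 1
      ring
    rw [hGen, ← hTr, mul_assoc, hTpow]
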